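/- Let σ be a permutation of {1,…,r}, let i ∈ {1,…,r} with σ(i) ≠ i, and let j ∈ {1,…,r} with σ(j) = j. Put σ' = σ ∘ (i j). If min(i, σ(i)) < j < max(i, σ(i)), then ht(σ') = ht(σ); if j < min(i, σ(i)) or j > max(i, σ(i)), then ht(σ') > ht(σ). -/

import Mathlib

open scoped BigOperators

namespace PermStats

/-- The number of drops `c_<(σ) = #{i : σ(i) < i}` of a permutation of `Fin r`. -/
def drops {r : ℕ} (σ : Equiv.Perm (Fin r)) : ℕ :=
  (Finset.univ.filter fun i => σ i < i).card

/-- The number of jumps `c_>(σ) = #{i : σ(i) > i}` of a permutation of `Fin r`. -/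
def jumps {r : ℕ} (σ : Equiv.Perm (Fin r)) : ℕ :=
  (Finset.univ.filter fun i => i < σ i).card

/-- The height `ht(σ) = ∑_i |σ(i) - i|` of a permutation of `Fin r`. -/
def ht {r : ℕ} (σ : Equiv.Perm (Fin r)) : ℕ :=
  ∑ i : Fin r, Nat.dist ((σ i : ℕ)) (i : ℕ)

/-- Let `σ` be a permutation of `{1,…,r}`, `i` with `σ(i) ≠ i`, `j` with
`σ(j) = j`, and `σ' = σ ∘ (i j) = σ * Equiv.swap i j`.  If `min(i, σ(i)) < j < max(i, σ(i))`
then `ht(σ') = ht(σ)`; if `j < min(i, σ(i))` or `j > max(i, σ(i))` then `ht(σ') > ht(σ)`. -/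
theorem ht_swap_fixed_point (r : ℕ) (σ : Equiv.Perm (Fin r)) (i j : Fin r)
    (hi : σ i ≠ i) (hj : σ j = j) :
    (min i (σ i) < j ∧ j < max i (σ i) → ht (σ * Equiv.swap i j) = ht σ) ∧
    (j < min i (σ i) ∨ max i (σ i) < j → ht σ < ht (σ * Equiv.swap i j)) := by
  have hij : i ≠ j := fun h => hi (h ▸ hj)
  have hsub : ({i, j} : Finset (Fin r)) ⊆ Finset.univ := Finset.subset_univ _
  have key : ∀ τ : Equiv.Perm (Fin r),
      ht τ = ∑ k ∈ Finset.univ \ {i, j}, Nat.dist ((τ k : ℕ)) (k : ℕ)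
        + (Nat.dist ((τ i : ℕ)) (i : ℕ) + Nat.dist ((τ j : ℕ)) (j : ℕ)) := by
    intro τ
    rw [ht, ← Finset.sum_sdiff hsub, Finset.sum_pair hij]
  have hsame : ∀ k ∈ Finset.univ \ ({i, j} : Finset (Fin r)),
      Nat.dist (((σ * Equiv.swap i j) k : ℕ)) (k : ℕ) = Nat.dist ((σ k : ℕ)) (k : ℕ) := by
    intro k hk
    simp only [Finset.mem_sdiff, Finset.mem_insert, Finset.mem_singleton, not_or] at hk
    simp [Equiv.Perm.mul_apply, Equiv.swap_apply_of_ne_of_ne hk.2.1 hk.2.2]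
  have h1 : ht (σ * Equiv.swap i j)
      = ∑ k ∈ Finset.univ \ {i, j}, Nat.dist ((σ k : ℕ)) (k : ℕ)
        + (Nat.dist ((j : ℕ)) (i : ℕ) + Nat.dist ((σ i : ℕ)) (j : ℕ)) := by
    rw [key (σ * Equiv.swap i j), Finset.sum_congr rfl hsame]
    simp [Equiv.Perm.mul_apply, Equiv.swap_apply_left, Equiv.swap_apply_right, hj]
  have h2 : ht σ = ∑ k ∈ Finset.univ \ {i, j}, Nat.dist ((σ k : ℕ)) (k : ℕ)
      + (Nat.dist ((σ i : ℕ)) (i : ℕ) + 0) := by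
    rw [key σ, hj]
    simp [Nat.dist_self]
  have hne : (σ i : ℕ) ≠ (i : ℕ) := fun h => hi (Fin.ext h)
  rw [h1, h2]
  constructor
  · rintro ⟨hl, hr⟩
    rw [min_lt_iff, Fin.lt_def, Fin.lt_def] at hl
    rw [lt_max_iff, Fin.lt_def, Fin.lt_def] at hr
    have : Nat.dist ((j : ℕ)) (i : ℕ) + Nat.dist ((σ i : ℕ)) (j : ℕ)
        = Nat.dist ((σ i : ℕ)) (i : ℕ) + 0 := by
      simp only [Nat.dist]; omega
    omega
  · intro hc
    have : Nat.dist ((σ i : ℕ)) (i : ℕ) + 0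
        < Nat.dist ((j : ℕ)) (i : ℕ) + Nat.dist ((σ i : ℕ)) (j : ℕ) := by
      rcases hc with h | h
      · rw [lt_min_iff, Fin.lt_def, Fin.lt_def] at h
        simp only [Nat.dist]; omega
      · rw [max_lt_iff, Fin.lt_def, Fin.lt_def] at h
        simp only [Nat.dist]; omega
    omega

end PermStats
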